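/- The ideal 𝔫 of C generated by {t_i − 1 : i ≥ 1} ∪ {u_i : i ≥ 1} is a maximal ideal of C, and the extension of 𝔪 along φ (the ideal of C generated by φ(𝔪)) is equal to 𝔫. -/

import Mathlib

set_option synthInstance.maxHeartbeats 400000


/-!
Setup: `A = ℂ[x_i, y_i : i ∈ ℕ]` is the polynomial ring in countably many pairs
of variables (`x_i = X (Sum.inl i)`, `y_i = X (Sum.inr i)`).
`P = ℂ[t_i, u_i : i ∈ ℕ]` and `C' = ℂ[t_i^{±1}, u_i]` is the localization of `P`
at the multiplicative set generated by the `t_i`.  `phi : A → C'` is the unique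
ℂ-algebra homomorphism with `phi(x_i) = t_i` and `phi(y_i) = t_i⁻¹ + u_i`.
`mIdeal` is the ideal of `A` generated by the `x_i − 1` and `y_i − 1`, and
`nIdeal` is the ideal of `C'` generated by the `t_i − 1` and `u_i`.
-/

noncomputable section

open MvPolynomial

/-- `A = ℂ[x_i, y_i : i ≥ 1]`. -/
abbrev A : Type := MvPolynomial (ℕ ⊕ ℕ) ℂ

/-- `P = ℂ[t_i, u_i : i ≥ 1]` (`t_i = X (Sum.inl i)`, `u_i = X (Sum.inr i)`). -/
abbrev P : Type := MvPolynomial (ℕ ⊕ ℕ) ℂ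

/-- The multiplicative set generated by the `t_i`. -/
def T : Submonoid P :=
  Submonoid.closure (Set.range fun i : ℕ => (X (Sum.inl i) : P))

/-- `C' = ℂ[t_i^{±1}, u_i : i ≥ 1]`, the localization of `P` at the `t_i`. -/
abbrev C' : Type := Localization T

/-- The inverse `t_i⁻¹` in `C'`. -/
def tInv (i : ℕ) : C' :=
  Localization.mk 1 ⟨X (Sum.inl i), Submonoid.subset_closure (Set.mem_range_self i)⟩

/-- `phi : A → C'`, the unique ℂ-algebra homomorphism with `phi(x_i) = t_i`
and `phi(y_i) = t_i⁻¹ + u_i`. -/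
def phi : A →+* C' :=
  eval₂Hom ((algebraMap P C').comp (MvPolynomial.C)) fun j =>
    match j with
    | Sum.inl i => algebraMap P C' (X (Sum.inl i))
    | Sum.inr i => tInv i + algebraMap P C' (X (Sum.inr i))

/-- The maximal ideal `𝔪 = (x_i − 1, y_i − 1 : i ≥ 1)` of `A`. -/
def mIdeal : Ideal A := Ideal.span (Set.range fun j : ℕ ⊕ ℕ => (X j : A) - 1)

/-- The ideal `𝔫 = (t_i − 1, u_i : i ≥ 1)` of `C'`. -/
def nIdeal : Ideal C' :=
  Ideal.span ((Set.range fun i : ℕ => algebraMap P C' (X (Sum.inl i)) - 1) ∪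
    (Set.range fun i : ℕ => algebraMap P C' (X (Sum.inr i))))

/- ### Auxiliary material -/

/-- The point `t_i = 1`, `u_i = 0`. -/
def av : ℕ ⊕ ℕ → ℂ := Sum.elim (fun _ => 1) (fun _ => 0)

/-- Evaluation of `P` at the point `av`. -/
def ev : P →+* ℂ := eval₂Hom (RingHom.id ℂ) av

/-- The ideal of `P` generated by the `t_i - 1` and `u_i`. -/
def spanP : Ideal P :=
  Ideal.span ((Set.range fun i : ℕ => (X (Sum.inl i) : P) - 1) ∪
    (Set.range fun i : ℕ => (X (Sum.inr i) : P)))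

lemma gen_mem (j : ℕ ⊕ ℕ) : (X j : P) - C (av j) ∈ spanP := by
  cases j with
  | inl i =>
    have : (X (Sum.inl i) : P) - C (av (Sum.inl i)) = X (Sum.inl i) - 1 := by
      simp [av]
    rw [this]
    exact Ideal.subset_span (Or.inl ⟨i, rfl⟩)
  | inr i =>
    have : (X (Sum.inr i) : P) - C (av (Sum.inr i)) = X (Sum.inr i) := by
      simp [av]
    rw [this]
    exact Ideal.subset_span (Or.inr ⟨i, rfl⟩)

lemma sub_C_mem (p : P) : p - C (ev p) ∈ spanP := by
  induction p using MvPolynomial.induction_on with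
  | C c => simp [ev]
  | add p q hp hq =>
    have : p + q - C (ev (p + q)) = (p - C (ev p)) + (q - C (ev q)) := by
      rw [map_add, map_add]; ring
    rw [this]; exact Ideal.add_mem _ hp hq
  | mul_X p j hp =>
    have : p * X j - C (ev (p * X j)) =
        (p - C (ev p)) * C (av j) + p * (X j - C (av j)) := by
      rw [map_mul, map_mul]
      have : ev (X j) = av j := by simp [ev]
      rw [this]; ring
    rw [this]
    exact Ideal.add_mem _ (Ideal.mul_mem_right _ _ hp)
      (Ideal.mul_mem_left _ _ (gen_mem j))

lemma ker_ev : RingHom.ker ev = spanP := by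
  apply le_antisymm
  · intro p hp
    have h0 : ev p = 0 := hp
    have := sub_C_mem p
    rwa [h0, map_zero, sub_zero] at this
  · rw [spanP, Ideal.span_le]
    rintro x (⟨i, rfl⟩ | ⟨i, rfl⟩) <;> simp [RingHom.mem_ker, ev, av]

lemma hT : ∀ t : T, IsUnit (ev t) := by
  rintro ⟨t, ht⟩
  induction ht using Submonoid.closure_induction with
  | mem x hx => obtain ⟨i, rfl⟩ := hx; simp [ev, av]
  | one => simp
  | mul x y _ _ hx hy => rw [map_mul]; exact hx.mul hy

/-- The evaluation `C' → ℂ`, `t_i ↦ 1`, `u_i ↦ 0`. -/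
def psi : C' →+* ℂ := IsLocalization.lift (M := T) (S := C') hT

lemma psi_algebraMap (p : P) : psi (algebraMap P C' p) = ev p :=
  IsLocalization.lift_eq hT p

lemma psi_surjective : Function.Surjective psi := fun c =>
  ⟨algebraMap P C' (C c), by rw [psi_algebraMap]; simp [ev]⟩

lemma map_spanP_le : Ideal.map (algebraMap P C') spanP ≤ nIdeal := by
  rw [spanP, Ideal.map_span, Ideal.span_le]
  rintro _ ⟨x, (⟨i, rfl⟩ | ⟨i, rfl⟩), rfl⟩
  · rw [map_sub, map_one]
    exact Ideal.subset_span (Or.inl ⟨i, rfl⟩)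
  · exact Ideal.subset_span (Or.inr ⟨i, rfl⟩)

lemma nIdeal_eq_ker : nIdeal = RingHom.ker psi := by
  apply le_antisymm
  · rw [nIdeal, Ideal.span_le]
    rintro x (⟨i, rfl⟩ | ⟨i, rfl⟩) <;>
      simp [RingHom.mem_ker, psi_algebraMap, ev, av]
  · intro x hx
    obtain ⟨⟨p, s⟩, rfl⟩ := IsLocalization.mk'_surjective T x
    show IsLocalization.mk' C' p s ∈ nIdeal
    have hx' : psi (IsLocalization.mk' C' p s) = 0 := hx
    have hp : ev p = 0 := by
      have := (IsLocalization.lift_mk'_spec (S := C') (g := ev) hT p 0 s).mp hx'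
      simpa using this
    have hspan : p ∈ spanP := ker_ev ▸ hp
    rw [IsLocalization.mk'_eq_mul_mk'_one]
    exact Ideal.mul_mem_right _ _
      (map_spanP_le (Ideal.mem_map_of_mem _ hspan))

lemma phi_X_inl (i : ℕ) : phi (X (Sum.inl i)) = algebraMap P C' (X (Sum.inl i)) := by
  simp [phi]

lemma phi_X_inr (i : ℕ) :
    phi (X (Sum.inr i)) = tInv i + algebraMap P C' (X (Sum.inr i)) := by
  simp [phi]

lemma tInv_mul (i : ℕ) : tInv i * algebraMap P C' (X (Sum.inl i)) = 1 := by
  rw [tInv, Localization.mk_eq_mk'_apply]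
  set_option linter.unnecessarySimpa false in
  simpa using IsLocalization.mk'_spec (M := T) C' (1 : P)
    ⟨X (Sum.inl i), Submonoid.subset_closure (Set.mem_range_self i)⟩

/-- `𝔫` is a maximal ideal of `C'`, and the extension of `𝔪` along `phi`
equals `𝔫`. -/
theorem nIdeal_isMaximal_and_map_mIdeal :
    nIdeal.IsMaximal ∧ Ideal.map phi mIdeal = nIdeal := by
  constructor
  · rw [nIdeal_eq_ker]
    exact RingHom.ker_isMaximal_of_surjective psi psi_surjective
  · apply le_antisymm
    · rw [mIdeal, Ideal.map_span, Ideal.span_le]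
      rintro _ ⟨_, ⟨j, rfl⟩, rfl⟩
      cases j with
      | inl i =>
        rw [map_sub, map_one, phi_X_inl]
        exact Ideal.subset_span (Or.inl ⟨i, rfl⟩)
      | inr i =>
        rw [map_sub, map_one, phi_X_inr]
        have key : tInv i + algebraMap P C' (X (Sum.inr i)) - 1 =
            algebraMap P C' (X (Sum.inr i)) +
              (-(tInv i)) * (algebraMap P C' (X (Sum.inl i)) - 1) := by
          linear_combination tInv_mul i
        rw [key]
        exact Ideal.add_mem _ (Ideal.subset_span (Or.inr ⟨i, rfl⟩))
          (Ideal.mul_mem_left _ _ (Ideal.subset_span (Or.inl ⟨i, rfl⟩)))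
    · rw [nIdeal, Ideal.span_le]
      have hmem : ∀ j : ℕ ⊕ ℕ, (X j : A) - 1 ∈ mIdeal := fun j =>
        Ideal.subset_span ⟨j, rfl⟩
      rintro _ (⟨i, rfl⟩ | ⟨i, rfl⟩)
      · have : algebraMap P C' (X (Sum.inl i)) - 1 = phi (X (Sum.inl i) - 1) := by
          rw [map_sub, map_one, phi_X_inl]
        show algebraMap P C' (X (Sum.inl i)) - 1 ∈ Ideal.map phi mIdeal
        rw [this]
        exact Ideal.mem_map_of_mem phi (hmem _)
      · have : algebraMap P C' (X (Sum.inr i)) =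
            phi (X (Sum.inr i) - 1) + tInv i * phi (X (Sum.inl i) - 1) := by
          rw [map_sub, map_one, phi_X_inr, map_sub, map_one, phi_X_inl]
          linear_combination -tInv_mul i
        show algebraMap P C' (X (Sum.inr i)) ∈ Ideal.map phi mIdeal
        rw [this]
        exact Ideal.add_mem _ (Ideal.mem_map_of_mem phi (hmem _))
          (Ideal.mul_mem_left _ _ (Ideal.mem_map_of_mem phi (hmem _)))

end
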